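/- For the Z-channel with correct-transmission probability P₁ ∈ (0,1) for input 1, the capacity-achieving input probability of input 1 is α* = 1/(P₁·(2^{H_b(P₁)/P₁} + 1)). -/

import Mathlib

open Real

/-- Binary entropy function (base 2). -/
noncomputable def H2 (x : ℝ) : ℝ :=
  -(x * Real.logb 2 x) - (1 - x) * Real.logb 2 (1 - x)

/-- Mutual information of the Z-channel (`W(0|0)=1`, `W(1|1)=P₁`) when the input is `1`
with probability `α`. -/
noncomputable def zMI (P₁ α : ℝ) : ℝ := H2 (α * P₁) - α * H2 P₁

lemma gibbs (t q : ℝ) (ht0 : 0 ≤ t) (ht1 : t ≤ 1) (hq0 : 0 < q) (hq1 : q < 1) :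
    H2 t ≤ -(t * Real.logb 2 q) - (1 - t) * Real.logb 2 (1 - q) := by
  have hlog2 : (0:ℝ) < Real.log 2 := Real.log_pos (by norm_num)
  rcases eq_or_lt_of_le ht0 with h0 | h0
  · have : Real.logb 2 (1 - q) ≤ 0 :=
      Real.logb_nonpos (by norm_num) (by linarith) (by linarith)
    simp [H2, ← h0]
    linarith
  rcases eq_or_lt_of_le ht1 with h1 | h1
  · have : Real.logb 2 q ≤ 0 :=
      Real.logb_nonpos (by norm_num) (by linarith) (by linarith)
    simp [H2, h1]
    linarith
  -- interior case
  have h1t : 0 < 1 - t := by linarith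
  have k1 : t * (Real.log q - Real.log t) ≤ q - t := by
    have := Real.log_le_sub_one_of_pos (show 0 < q / t by positivity)
    rw [Real.log_div hq0.ne' h0.ne'] at this
    have := mul_le_mul_of_nonneg_left this ht0
    calc t * (Real.log q - Real.log t) ≤ t * (q / t - 1) := this
      _ = q - t := by field_simp
  have k2 : (1 - t) * (Real.log (1 - q) - Real.log (1 - t)) ≤ (1 - q) - (1 - t) := by
    have := Real.log_le_sub_one_of_pos (div_pos (show (0:ℝ) < 1 - q by linarith) h1t)
    rw [Real.log_div (by linarith) h1t.ne'] at this
    have := mul_le_mul_of_nonneg_left this h1t.le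
    calc (1 - t) * (Real.log (1 - q) - Real.log (1 - t)) ≤ (1 - t) * ((1 - q) / (1 - t) - 1) :=
        this
      _ = (1 - q) - (1 - t) := by field_simp
  have key : -(t * Real.log t) - (1 - t) * Real.log (1 - t) ≤
      -(t * Real.log q) - (1 - t) * Real.log (1 - q) := by nlinarith
  have expand : ∀ a : ℝ, H2 a = (-(a * Real.log a) - (1 - a) * Real.log (1 - a)) / Real.log 2 := by
    intro a; simp only [H2, Real.logb]; ring
  rw [expand]
  have : -(t * Real.logb 2 q) - (1 - t) * Real.logb 2 (1 - q) =
      (-(t * Real.log q) - (1 - t) * Real.log (1 - q)) / Real.log 2 := by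
    simp only [Real.logb]; ring
  rw [this]
  exact div_le_div_of_nonneg_right key hlog2.le |>.trans_eq rfl

lemma key_max (c t : ℝ) (hc : 0 < c) (ht0 : 0 ≤ t) (ht1 : t ≤ 1) :
    H2 t - t * Real.logb 2 c ≤ H2 (1 / (c + 1)) - (1 / (c + 1)) * Real.logb 2 c := by
  set q : ℝ := 1 / (c + 1) with hq
  have hc1 : (0:ℝ) < c + 1 := by linarith
  have hq0 : 0 < q := by positivity
  have hq1 : q < 1 := by rw [hq, div_lt_one hc1]; linarith
  have h1q : 1 - q = q * c := by rw [hq]; field_simp; ring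
  have hlogb : Real.logb 2 (1 - q) = Real.logb 2 q + Real.logb 2 c := by
    rw [h1q, Real.logb_mul hq0.ne' hc.ne']
  have hg := gibbs t q ht0 ht1 hq0 hq1
  have hH2q : H2 q = -(q * Real.logb 2 q) - (1 - q) * Real.logb 2 (1 - q) := rfl
  rw [hH2q, hlogb]
  rw [hlogb] at hg
  nlinarith [hg]

/-- For the Z-channel with correct-transmission probability `P₁ ∈ (0,1)` for input `1`,
the capacity-achieving input probability of `1` is `α* = 1/(P₁ (2^{H_b(P₁)/P₁}+1))`. -/
theorem z_channel_argmax
    (P₁ : ℝ) (hP₁ : P₁ ∈ Set.Ioo (0 : ℝ) 1)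
    (αstar : ℝ) (hαstar : αstar = 1 / (P₁ * ((2 : ℝ) ^ (H2 P₁ / P₁) + 1))) :
    αstar ∈ Set.Icc (0 : ℝ) 1 ∧
      ∀ α ∈ Set.Icc (0 : ℝ) 1, zMI P₁ α ≤ zMI P₁ αstar := by
  obtain ⟨hP0, hP1⟩ := hP₁
  set c : ℝ := (2 : ℝ) ^ (H2 P₁ / P₁) with hcdef
  have hc : 0 < c := Real.rpow_pos_of_pos (by norm_num) _
  have hL : Real.logb 2 c = H2 P₁ / P₁ := Real.logb_rpow (by norm_num) (by norm_num)
  have hc1 : (0:ℝ) < c + 1 := by linarith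
  -- c ≥ (1 - P₁)/P₁
  have hlog1P : Real.logb 2 (1 - P₁) ≤ 0 :=
    Real.logb_nonpos (by norm_num) (by linarith) (by linarith)
  have hratio : (1 - P₁) / P₁ ≤ c := by
    have hr : (1 - P₁) / P₁ = (2:ℝ) ^ (Real.logb 2 ((1 - P₁) / P₁)) :=
      (Real.rpow_logb (by norm_num) (by norm_num) (div_pos (by linarith) hP0)).symm
    rw [hr, hcdef]
    apply Real.rpow_le_rpow_left_iff (by norm_num : (1:ℝ) < 2) |>.2
    rw [Real.logb_div (by linarith) hP0.ne', le_div_iff₀ hP0]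
    have : (Real.logb 2 (1 - P₁) - Real.logb 2 P₁) * P₁ =
        P₁ * Real.logb 2 (1 - P₁) - P₁ * Real.logb 2 P₁ := by ring
    rw [this]
    simp only [H2]
    nlinarith [hlog1P]
  have hle1 : 1 ≤ P₁ * (c + 1) := by
    have := (div_le_iff₀ hP0).1 hratio
    nlinarith
  have hα0 : 0 ≤ αstar := by rw [hαstar]; positivity
  have hα1 : αstar ≤ 1 := by
    rw [hαstar, div_le_one (by positivity)]; exact hle1
  refine ⟨⟨hα0, hα1⟩, ?_⟩
  intro α ⟨h0, h1⟩
  have hαP : αstar * P₁ = 1 / (c + 1) := by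
    rw [hαstar]; field_simp
  have rewriteMI : ∀ β : ℝ, zMI P₁ β = H2 (β * P₁) - (β * P₁) * Real.logb 2 c := by
    intro β
    rw [zMI, hL]
    field_simp
  rw [rewriteMI, rewriteMI, hαP]
  exact key_max c (α * P₁) hc (by positivity) (by nlinarith)
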